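/- Fix a > 2 and λ > 0, and define the SCAD penalty ρ_λ : ℝ → ℝ by ρ_λ(t) = λ|t| for |t| ≤ λ, ρ_λ(t) = −(t² − 2aλ|t| + λ²)/(2(a − 1)) for λ < |t| ≤ aλ, and ρ_λ(t) = (a + 1)λ²/2 for |t| > aλ. Then ρ_λ satisfies Assumption 1 with L = 1 and μ = 1/(a − 1); that is: ρ_λ(0) = 0 and ρ_λ(−t) = ρ_λ(t) for all t; ρ_λ is nondecreasing on [0, ∞); t ↦ ρ_λ(t)/t is nonincreasing on (0, ∞); ρ_λ is differentiable at every t ≠ 0 with lim_{t→0⁺} ρ_λ'(t) = λ; and t ↦ ρ_λ(t) + t²/(2(a − 1)) is convex on ℝ. -/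

import Mathlib

/-- The SCAD penalty with parameters `a > 2` and `λ > 0`. -/
noncomputable def scad (a lam t : ℝ) : ℝ :=
  if |t| ≤ lam then lam * |t|
  else if |t| ≤ a * lam then -(t ^ 2 - 2 * a * lam * |t| + lam ^ 2) / (2 * (a - 1))
  else (a + 1) * lam ^ 2 / 2

/-- Assumption 1 on the regularizer `ρ_λ` with parameters `λ, L, μ`. -/
structure Assumption1 (ρ : ℝ → ℝ) (lam L mu : ℝ) : Prop where
  zero : ρ 0 = 0
  even : ∀ t : ℝ, ρ (-t) = ρ t
  mono : ∀ s t : ℝ, 0 ≤ s → s ≤ t → ρ s ≤ ρ t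
  slope : ∀ s t : ℝ, 0 < s → s ≤ t → ρ t / t ≤ ρ s / s
  diff : ∀ t : ℝ, t ≠ 0 → DifferentiableAt ℝ ρ t
  deriv_lim : Filter.Tendsto (deriv ρ) (nhdsWithin 0 (Set.Ioi 0)) (nhds (lam * L))
  conv : ConvexOn ℝ Set.univ (fun t => ρ t + (mu / 2) * t ^ 2)

namespace ScadAux

set_option linter.unusedSectionVars false

open Set Filter

/-- Gluing a piecewise function's derivative at a point. -/
lemma glue {f g F : ℝ → ℝ} {l c u d : ℝ} (hl : l < c) (hu : c < u)
    (hf : HasDerivAt f d c) (hg : HasDerivAt g d c)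
    (h1 : ∀ x, l ≤ x → x ≤ c → F x = f x) (h2 : ∀ x, c ≤ x → x ≤ u → F x = g x) :
    HasDerivAt F d c := by
  have hc : F c = f c := h1 c hl.le le_rfl
  have hc2 : F c = g c := h2 c le_rfl hu.le
  have H1 : HasDerivWithinAt F d (Set.Iic c) c := by
    apply (hf.hasDerivWithinAt).congr_of_eventuallyEq _ hc
    filter_upwards [self_mem_nhdsWithin,
      mem_nhdsWithin_of_mem_nhds (Ioi_mem_nhds hl)] with x hx hx'
    exact h1 x (le_of_lt hx') hx
  have H2 : HasDerivWithinAt F d (Set.Ici c) c := by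
    apply (hg.hasDerivWithinAt).congr_of_eventuallyEq _ hc2
    filter_upwards [self_mem_nhdsWithin,
      mem_nhdsWithin_of_mem_nhds (Iio_mem_nhds hu)] with x hx hx'
    exact h2 x hx (le_of_lt hx')
  have H := H1.union H2
  rw [Set.Iic_union_Ici] at H
  exact H.hasDerivAt Filter.univ_mem

variable {a lam : ℝ}

/-- The smooth part of the SCAD penalty plus quadratic. -/
noncomputable def hfun (a lam t : ℝ) : ℝ := scad a lam t - lam * |t| + t ^ 2 / (2 * (a - 1))

/-- The derivative of `hfun`. -/
noncomputable def dfun (a lam t : ℝ) : ℝ :=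
  (if t ≤ -(a * lam) then t + (a - 1) * lam
   else if t ≤ -lam then -lam
   else if t ≤ lam then t
   else if t ≤ a * lam then lam
   else t - (a - 1) * lam) / (a - 1)

section pieces

variable (ha : 2 < a) (hlam : 0 < lam)
include ha hlam

lemma h_eq1 {t : ℝ} (ht : |t| ≤ lam) : hfun a lam t = t ^ 2 / (2 * (a - 1)) := by
  have : scad a lam t = lam * |t| := by rw [scad, if_pos ht]
  rw [hfun, this]; ring

lemma h_eq2 {t : ℝ} (ht1 : lam ≤ t) (ht2 : t ≤ a * lam) :
    hfun a lam t = (2 * lam * t - lam ^ 2) / (2 * (a - 1)) := by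
  have ht0 : 0 < t := lt_of_lt_of_le hlam ht1
  have ha1 : a - 1 ≠ 0 := by intro h; linarith
  rw [hfun, scad, abs_of_pos ht0]
  split_ifs with hc1
  · have htl : t = lam := le_antisymm hc1 ht1
    subst htl; field_simp; try ring
  · field_simp; ring

lemma h_eq2n {t : ℝ} (ht1 : -(a * lam) ≤ t) (ht2 : t ≤ -lam) :
    hfun a lam t = (-(2 * lam * t) - lam ^ 2) / (2 * (a - 1)) := by
  have ht0 : t < 0 := lt_of_le_of_lt ht2 (by linarith)
  have ha1 : a - 1 ≠ 0 := by intro h; linarith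
  rw [hfun, scad, abs_of_neg ht0]
  split_ifs with hc1 hc2
  · have htl : t = -lam := le_antisymm ht2 (by linarith)
    subst htl; field_simp; try ring
  · field_simp; ring
  · exact absurd (by linarith : -t ≤ a * lam) hc2

lemma h_eq3 {t : ℝ} (ht : a * lam ≤ t) :
    hfun a lam t = (t ^ 2 - 2 * (a - 1) * lam * t + (a ^ 2 - 1) * lam ^ 2) / (2 * (a - 1)) := by
  have ht0 : 0 < t := lt_of_lt_of_le (by nlinarith) ht
  have ha1 : a - 1 ≠ 0 := by intro h; linarith
  rw [hfun, scad, abs_of_pos ht0]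
  split_ifs with hc1 hc2
  · nlinarith
  · have htl : t = a * lam := le_antisymm hc2 ht
    subst htl; field_simp; try ring
  · field_simp; ring

lemma h_eq3n {t : ℝ} (ht : t ≤ -(a * lam)) :
    hfun a lam t = (t ^ 2 + 2 * (a - 1) * lam * t + (a ^ 2 - 1) * lam ^ 2) / (2 * (a - 1)) := by
  have ht0 : t < 0 := lt_of_le_of_lt ht (by nlinarith)
  have ha1 : a - 1 ≠ 0 := by intro h; linarith
  rw [hfun, scad, abs_of_neg ht0]
  split_ifs with hc1 hc2
  · nlinarith
  · have htl : t = -(a * lam) := le_antisymm ht (by linarith)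
    subst htl; field_simp; try ring
  · field_simp; ring

-- polynomial derivative helpers
lemma dp1 (t : ℝ) : HasDerivAt (fun x : ℝ => x ^ 2 / (2 * (a - 1))) (t / (a - 1)) t := by
  have ha1 : a - 1 ≠ 0 := by intro h; linarith
  have h := (hasDerivAt_pow 2 t).div_const (2 * (a - 1))
  refine h.congr_deriv ?_
  field_simp; ring

lemma dp2 (t : ℝ) :
    HasDerivAt (fun x : ℝ => (2 * lam * x - lam ^ 2) / (2 * (a - 1))) (lam / (a - 1)) t := by
  have ha1 : a - 1 ≠ 0 := by intro h; linarith
  have h : HasDerivAt (fun x : ℝ => 2 * lam * x - lam ^ 2) (2 * lam) t := by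
    simpa using ((hasDerivAt_id t).const_mul (2 * lam)).sub_const (lam ^ 2)
  refine (h.div_const (2 * (a - 1))).congr_deriv ?_
  field_simp

lemma dp2n (t : ℝ) :
    HasDerivAt (fun x : ℝ => (-(2 * lam * x) - lam ^ 2) / (2 * (a - 1))) (-lam / (a - 1)) t := by
  have ha1 : a - 1 ≠ 0 := by intro h; linarith
  have h : HasDerivAt (fun x : ℝ => -(2 * lam * x) - lam ^ 2) (-(2 * lam)) t := by
    simpa using (((hasDerivAt_id t).const_mul (2 * lam)).neg).sub_const (lam ^ 2)
  refine (h.div_const (2 * (a - 1))).congr_deriv ?_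
  field_simp

lemma dp3 (t : ℝ) :
    HasDerivAt
      (fun x : ℝ => (x ^ 2 - 2 * (a - 1) * lam * x + (a ^ 2 - 1) * lam ^ 2) / (2 * (a - 1)))
      ((t - (a - 1) * lam) / (a - 1)) t := by
  have ha1 : a - 1 ≠ 0 := by intro h; linarith
  have h : HasDerivAt (fun x : ℝ => x ^ 2 - 2 * (a - 1) * lam * x + (a ^ 2 - 1) * lam ^ 2)
      (2 * t - 2 * (a - 1) * lam) t := by
    simpa using (((hasDerivAt_pow 2 t).sub
      ((hasDerivAt_id t).const_mul (2 * (a - 1) * lam))).add_const ((a ^ 2 - 1) * lam ^ 2))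
  refine (h.div_const (2 * (a - 1))).congr_deriv ?_
  field_simp

lemma dp3n (t : ℝ) :
    HasDerivAt
      (fun x : ℝ => (x ^ 2 + 2 * (a - 1) * lam * x + (a ^ 2 - 1) * lam ^ 2) / (2 * (a - 1)))
      ((t + (a - 1) * lam) / (a - 1)) t := by
  have ha1 : a - 1 ≠ 0 := by intro h; linarith
  have h : HasDerivAt (fun x : ℝ => x ^ 2 + 2 * (a - 1) * lam * x + (a ^ 2 - 1) * lam ^ 2)
      (2 * t + 2 * (a - 1) * lam) t := by
    simpa using (((hasDerivAt_pow 2 t).add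
      ((hasDerivAt_id t).const_mul (2 * (a - 1) * lam))).add_const ((a ^ 2 - 1) * lam ^ 2))
  refine (h.div_const (2 * (a - 1))).congr_deriv ?_
  field_simp

lemma hasDerivAt_hfun (t : ℝ) : HasDerivAt (hfun a lam) (dfun a lam t) t := by
  have h1 : (0 : ℝ) < a - 1 := by linarith
  have ha1 : a - 1 ≠ 0 := ne_of_gt h1
  have hal : lam < a * lam := by nlinarith
  rcases lt_trichotomy t (-(a * lam)) with h | h | h
  · have hD : dfun a lam t = (t + (a - 1) * lam) / (a - 1) := by
      unfold dfun; rw [if_pos h.le]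
    rw [hD]
    exact glue (sub_one_lt t) h (dp3n ha hlam t) (dp3n ha hlam t)
      (fun x _ hx => h_eq3n ha hlam (hx.trans h.le)) (fun x _ hx => h_eq3n ha hlam hx)
  · rw [h]
    have hD : dfun a lam (-(a * lam)) = (-(a * lam) + (a - 1) * lam) / (a - 1) := by
      unfold dfun; rw [if_pos le_rfl]
    rw [hD]
    have hg : HasDerivAt (fun x : ℝ => (-(2 * lam * x) - lam ^ 2) / (2 * (a - 1)))
        ((-(a * lam) + (a - 1) * lam) / (a - 1)) (-(a * lam)) := by
      convert dp2n ha hlam (-(a * lam)) using 1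
      field_simp; ring
    exact glue (sub_one_lt _) (show -(a * lam) < -lam by linarith) (dp3n ha hlam _) hg
      (fun x _ hx => h_eq3n ha hlam hx) (fun x hx hx' => h_eq2n ha hlam hx hx')
  rcases lt_trichotomy t (-lam) with h2 | h2 | h2
  · have hD : dfun a lam t = -lam / (a - 1) := by
      unfold dfun; rw [if_neg (by linarith), if_pos h2.le]
    rw [hD]
    exact glue h h2 (dp2n ha hlam t) (dp2n ha hlam t)
      (fun x hx hx' => h_eq2n ha hlam hx (hx'.trans h2.le))
      (fun x hx hx' => h_eq2n ha hlam (h.le.trans hx) hx')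
  · rw [h2]
    have hD : dfun a lam (-lam) = -lam / (a - 1) := by
      unfold dfun; rw [if_neg (by linarith), if_pos le_rfl]
    rw [hD]
    exact glue (show -(a * lam) < -lam by linarith) (show -lam < lam by linarith)
      (dp2n ha hlam _) (dp1 ha hlam (-lam)) (fun x hx hx' => h_eq2n ha hlam hx hx')
      (fun x hx hx' => h_eq1 ha hlam (abs_le.2 ⟨hx, hx'⟩))
  rcases lt_trichotomy t lam with h3 | h3 | h3
  · have hD : dfun a lam t = t / (a - 1) := by
      unfold dfun; rw [if_neg (by linarith), if_neg (by linarith), if_pos h3.le]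
    rw [hD]
    exact glue h2 h3 (dp1 ha hlam t) (dp1 ha hlam t)
      (fun x hx hx' => h_eq1 ha hlam (abs_le.2 ⟨hx, hx'.trans h3.le⟩))
      (fun x hx hx' => h_eq1 ha hlam (abs_le.2 ⟨h2.le.trans hx, hx'⟩))
  · rw [h3]
    have hD : dfun a lam lam = lam / (a - 1) := by
      unfold dfun; rw [if_neg (by linarith), if_neg (by linarith), if_pos le_rfl]
    rw [hD]
    exact glue (show -lam < lam by linarith) hal (dp1 ha hlam lam) (dp2 ha hlam lam)
      (fun x hx hx' => h_eq1 ha hlam (abs_le.2 ⟨hx, hx'⟩))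
      (fun x hx hx' => h_eq2 ha hlam hx hx')
  rcases lt_trichotomy t (a * lam) with h4 | h4 | h4
  · have hD : dfun a lam t = lam / (a - 1) := by
      unfold dfun
      rw [if_neg (by linarith), if_neg (by linarith), if_neg (by linarith), if_pos h4.le]
    rw [hD]
    exact glue h3 h4 (dp2 ha hlam t) (dp2 ha hlam t)
      (fun x hx hx' => h_eq2 ha hlam hx (hx'.trans h4.le))
      (fun x hx hx' => h_eq2 ha hlam (h3.le.trans hx) hx')
  · rw [h4]
    have hD : dfun a lam (a * lam) = lam / (a - 1) := by
      unfold dfun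
      rw [if_neg (by linarith), if_neg (by linarith), if_neg (by linarith), if_pos le_rfl]
    rw [hD]
    have hg : HasDerivAt
        (fun x : ℝ => (x ^ 2 - 2 * (a - 1) * lam * x + (a ^ 2 - 1) * lam ^ 2) / (2 * (a - 1)))
        (lam / (a - 1)) (a * lam) := by
      convert dp3 ha hlam (a * lam) using 1
      field_simp; ring
    exact glue hal (lt_add_one _) (dp2 ha hlam _) hg
      (fun x hx hx' => h_eq2 ha hlam hx hx') (fun x hx _ => h_eq3 ha hlam hx)
  · have hD : dfun a lam t = (t - (a - 1) * lam) / (a - 1) := by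
      unfold dfun
      rw [if_neg (by linarith), if_neg (by linarith), if_neg (by linarith), if_neg (by linarith)]
    rw [hD]
    exact glue h4 (lt_add_one t) (dp3 ha hlam t) (dp3 ha hlam t)
      (fun x hx _ => h_eq3 ha hlam hx) (fun x hx _ => h_eq3 ha hlam (h4.le.trans hx))

lemma mono_dfun : Monotone (dfun a lam) := by
  intro s t hst
  have h1 : (0 : ℝ) < a - 1 := by linarith
  have hal : lam < a * lam := by nlinarith
  unfold dfun
  rw [div_le_div_iff_of_pos_right h1]
  split_ifs <;> linarith

lemma convexOn_hfun : ConvexOn ℝ Set.univ (hfun a lam) := by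
  have hdiff : Differentiable ℝ (hfun a lam) :=
    fun t => (hasDerivAt_hfun ha hlam t).differentiableAt
  have hderiv : deriv (hfun a lam) = dfun a lam := by
    funext t; exact (hasDerivAt_hfun ha hlam t).deriv
  exact Monotone.convexOn_univ_of_deriv hdiff (hderiv ▸ mono_dfun ha hlam)

-- evaluation lemmas for mono/slope (scaled to clear denominators)
lemma scad_mul1 {t : ℝ} (ht0 : 0 ≤ t) (ht : t ≤ lam) :
    2 * (a - 1) * scad a lam t = 2 * (a - 1) * lam * t := by
  rw [scad, abs_of_nonneg ht0, if_pos ht]; ring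

lemma scad_mul2 {t : ℝ} (ht1 : lam ≤ t) (ht2 : t ≤ a * lam) :
    2 * (a - 1) * scad a lam t = 2 * a * lam * t - t ^ 2 - lam ^ 2 := by
  have ht0 : 0 < t := lt_of_lt_of_le hlam ht1
  have ha1 : a - 1 ≠ 0 := by intro h; linarith
  rw [scad, abs_of_pos ht0]
  split_ifs with hc1
  · have htl : t = lam := le_antisymm hc1 ht1
    subst htl; try ring
  · field_simp; ring

lemma scad_mul3 {t : ℝ} (ht : a * lam ≤ t) :
    2 * (a - 1) * scad a lam t = (a ^ 2 - 1) * lam ^ 2 := by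
  have ht0 : 0 < t := lt_of_lt_of_le (by nlinarith) ht
  have ha1 : a - 1 ≠ 0 := by intro h; linarith
  rw [scad, abs_of_pos ht0]
  split_ifs with hc1 hc2
  · nlinarith
  · have htl : t = a * lam := le_antisymm hc2 ht
    subst htl; field_simp; try ring
  · ring

end pieces

end ScadAux

open ScadAux Set Filter in
theorem scad_satisfies_assumption1 (a lam : ℝ) (ha : 2 < a) (hlam : 0 < lam) :
    Assumption1 (scad a lam) lam 1 (1 / (a - 1)) := by
  have h1 : (0 : ℝ) < a - 1 := by linarith
  have h2a : (0 : ℝ) < 2 * (a - 1) := by linarith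
  have hal : lam < a * lam := by nlinarith
  constructor
  · -- zero
    rw [scad, if_pos (by simp [hlam.le])]
    simp
  · -- even
    intro t
    simp only [scad, abs_neg, even_two.neg_pow]
  · -- mono
    intro s t hs hst
    have ht : 0 ≤ t := hs.trans hst
    refine le_of_mul_le_mul_left ?_ h2a
    rcases le_total s lam with hs1 | hs1
    · rcases le_total t lam with ht1 | ht1
      · rw [scad_mul1 ha hlam hs hs1, scad_mul1 ha hlam ht ht1]
        nlinarith [mul_nonneg (mul_nonneg h1.le hlam.le) (sub_nonneg.2 hst)]
      · rcases le_total t (a * lam) with ht2 | ht2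
        · rw [scad_mul1 ha hlam hs hs1, scad_mul2 ha hlam ht1 ht2]
          nlinarith [mul_nonneg (sub_nonneg.2 ht1) (sub_nonneg.2
              (show t ≤ (2 * a - 1) * lam by nlinarith)),
            mul_nonneg (mul_nonneg h1.le hlam.le) (sub_nonneg.2 hs1)]
        · rw [scad_mul1 ha hlam hs hs1, scad_mul3 ha hlam ht2]
          nlinarith [mul_nonneg (mul_nonneg h1.le hlam.le) (sub_nonneg.2 hs1),
            mul_nonneg (mul_nonneg (show (0:ℝ) ≤ a - 1 by linarith) h1.le)
              (mul_nonneg hlam.le hlam.le)]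
    · rcases le_total s (a * lam) with hs2 | hs2
      · have ht1 : lam ≤ t := hs1.trans hst
        rcases le_total t (a * lam) with ht2 | ht2
        · rw [scad_mul2 ha hlam hs1 hs2, scad_mul2 ha hlam ht1 ht2]
          nlinarith [mul_nonneg (sub_nonneg.2 hst) (sub_nonneg.2
            (show s + t ≤ 2 * (a * lam) by linarith))]
        · rw [scad_mul2 ha hlam hs1 hs2, scad_mul3 ha hlam ht2]
          nlinarith [sq_nonneg (s - a * lam)]
      · rw [scad_mul3 ha hlam hs2, scad_mul3 ha hlam (hs2.trans hst)]
  · -- slope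
    intro s t hs hst
    have ht : 0 < t := hs.trans_le hst
    rw [div_le_div_iff₀ ht hs]
    refine le_of_mul_le_mul_left ?_ h2a
    rw [show 2 * (a - 1) * (scad a lam t * s) = 2 * (a - 1) * scad a lam t * s by ring,
      show 2 * (a - 1) * (scad a lam s * t) = 2 * (a - 1) * scad a lam s * t by ring]
    rcases le_total s lam with hs1 | hs1
    · rcases le_total t lam with ht1 | ht1
      · rw [scad_mul1 ha hlam ht.le ht1, scad_mul1 ha hlam hs.le hs1]
        nlinarith [sq_nonneg (s - t)]
      · rcases le_total t (a * lam) with ht2 | ht2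
        · rw [scad_mul2 ha hlam ht1 ht2, scad_mul1 ha hlam hs.le hs1]
          nlinarith [mul_nonneg hs.le (sq_nonneg (t - lam))]
        · rw [scad_mul3 ha hlam ht2, scad_mul1 ha hlam hs.le hs1]
          nlinarith [mul_nonneg (mul_nonneg hlam.le hs.le)
              (sub_nonneg.2 (show (a + 1) * lam ≤ 2 * t by nlinarith)),
            mul_pos h1 (mul_pos (mul_pos hlam hs) ht)]
    · rcases le_total s (a * lam) with hs2 | hs2
      · have ht1 : lam ≤ t := hs1.trans hst
        rcases le_total t (a * lam) with ht2 | ht2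
        · rw [scad_mul2 ha hlam ht1 ht2, scad_mul2 ha hlam hs1 hs2]
          nlinarith [mul_nonneg (sub_nonneg.2 hst) (sub_nonneg.2
            (show lam ^ 2 ≤ s * t by nlinarith))]
        · rw [scad_mul3 ha hlam ht2, scad_mul2 ha hlam hs1 hs2]
          have hq : 0 ≤ 2 * a * lam * s - s ^ 2 - lam ^ 2 := by
            nlinarith [mul_nonneg (sub_nonneg.2 hs1) (sub_nonneg.2 hs2)]
          nlinarith [mul_nonneg (sub_nonneg.2 ht2) hq,
            mul_nonneg (mul_nonneg hlam.le
              (sub_nonneg.2 (show lam ≤ a * s by nlinarith)))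
              (sub_nonneg.2 hs2)]
      · have ht2 : a * lam ≤ t := hs2.trans hst
        rw [scad_mul3 ha hlam ht2, scad_mul3 ha hlam hs2]
        nlinarith [mul_nonneg (mul_nonneg (show (0:ℝ) ≤ a ^ 2 - 1 by nlinarith)
          (mul_nonneg hlam.le hlam.le)) (sub_nonneg.2 hst)]
  · -- diff
    intro t ht
    have hs : scad a lam = fun x => hfun a lam x + lam * |x| - x ^ 2 / (2 * (a - 1)) := by
      funext x; rw [hfun]; ring
    rw [hs]
    exact (((hasDerivAt_hfun ha hlam t).differentiableAt.add
      ((differentiableAt_abs ht).const_mul lam)).sub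
      ((differentiableAt_pow 2).div_const _))
  · -- deriv_lim
    have hev : ∀ᶠ x in nhdsWithin 0 (Set.Ioi 0), deriv (scad a lam) x = lam := by
      filter_upwards [self_mem_nhdsWithin,
        mem_nhdsWithin_of_mem_nhds (Iio_mem_nhds hlam)] with x hx hx'
      have hx0 : (0 : ℝ) < x := hx
      have hx1 : x < lam := hx'
      have hda : HasDerivAt (scad a lam) lam x := by
        have hf : HasDerivAt (fun y : ℝ => lam * y) lam x := by
          simpa using (hasDerivAt_id x).const_mul lam
        refine glue hx0 hx' hf hf (fun y hy hy' => ?_) (fun y hy hy' => ?_) <;>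
        · rw [scad, if_pos (abs_le.2 ⟨by linarith, by linarith⟩),
            abs_of_nonneg (by linarith)]
      exact hda.deriv
    rw [mul_one]
    exact (Filter.tendsto_congr' hev).2 tendsto_const_nhds
  · -- conv
    have heq : (fun t => scad a lam t + (1 / (a - 1) / 2) * t ^ 2) =
        fun t => lam * |t| + hfun a lam t := by
      funext x; rw [hfun]; field_simp; ring
    rw [heq]
    have habs : ConvexOn ℝ Set.univ fun t : ℝ => lam * |t| := by
      have h := ((convexOn_univ_norm : ConvexOn ℝ Set.univ fun t : ℝ => |t|)).smul hlam.le
      simpa [smul_eq_mul] using h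
    exact habs.add (convexOn_hfun ha hlam)
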